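/- The attractor of any zipper in a complete metric space is connected (in fact path-connected). -/

import Mathlib

open Set

/-- `K` is the attractor (invariant nonempty compact set) of the system `S`. -/
def IsAttractor {X : Type*} [MetricSpace X] {m : ℕ} (S : Fin m → X → X) (K : Set X) : Prop :=
  K.Nonempty ∧ IsCompact K ∧ K = ⋃ i, S i '' K

/-- `S` is a zipper with vertices `z 0, …, z m` and signature `ε ∈ {0,1}^m`:
a system of injective contractions with `S j (z 0) = z (j + ε j)` and
`S j (z m) = z (j + 1 - ε j)` (0-based indexing of the maps). -/
def IsZipper {X : Type*} [MetricSpace X] {m : ℕ} (S : Fin m → X → X)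
    (z : ℕ → X) (ε : Fin m → ℕ) : Prop :=
  (∀ j, ε j ≤ 1) ∧
  (∀ j, Function.Injective (S j)) ∧
  (∀ j, ∃ r : NNReal, ContractingWith r (S j)) ∧
  (∀ j : Fin m, S j (z 0) = z (j.val + ε j)) ∧
  (∀ j : Fin m, S j (z m) = z (j.val + 1 - ε j))

/-- The affine maps `T i` of the zipper `S_{P,ε}` on `[0,1]` associated to a
partition `x` and signature `ε`. -/
def zipT {m : ℕ} (x : ℕ → ℝ) (ε : Fin m → ℕ) (i : Fin m) : ℝ → ℝ :=
  fun t => x (i.val + ε i) * (1 - t) + x (i.val + 1 - ε i) * t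

section ZipperProof
open Filter
set_option maxHeartbeats 1600000

namespace ZipAux

noncomputable def idx (m : ℕ) (hm : 0 < m) (t : ℝ) : Fin m := ⟨min ⌊m * t⌋₊ (m - 1), by omega⟩

noncomputable def sig {m : ℕ} (ε : Fin m → ℕ) (j : Fin m) (t : ℝ) : ℝ :=
  if ε j = 0 then m * t - j.val else (j.val + 1 : ℝ) - m * t

noncomputable def cl (t : ℝ) : ℝ := max 0 (min 1 t)

noncomputable def step {X : Type*} {m : ℕ} (hm : 0 < m) (S : Fin m → X → X) (ε : Fin m → ℕ)
    (g : ℝ → X) (t : ℝ) : X :=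
  S (idx m hm (cl t)) (g (sig ε (idx m hm (cl t)) (cl t)))

noncomputable def seq {X : Type*} {m : ℕ} (hm : 0 < m) (S : Fin m → X → X) (z : ℕ → X)
    (ε : Fin m → ℕ) : ℕ → ℝ → X
  | 0 => fun t => if t < 1 then z 0 else z m
  | n + 1 => step hm S ε (seq hm S z ε n)


theorem subset_of_invariant {X : Type*} [MetricSpace X] {m : ℕ}
    (S : Fin m → X → X) (c : NNReal) (hc : c < 1) (hS : ∀ j, LipschitzWith c (S j))
    (A K : Set X) (hA : A.Nonempty) (hAc : IsCompact A)
    (hAinv : (⋃ i, S i '' A) ⊆ A) (hKc : IsCompact K)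
    (hKinv : K ⊆ ⋃ i, S i '' K) : K ⊆ A := by
  obtain ⟨a, ha⟩ := hA
  have hcR : (c : ℝ) < 1 := hc
  have hc0 : (0:ℝ) ≤ c := c.coe_nonneg
  obtain ⟨M, hM⟩ := Metric.isBounded_iff.1 (hKc.isBounded.union hAc.isBounded)
  -- every point of K is within c^n * M of A
  have key : ∀ n : ℕ, ∀ x ∈ K, ∃ w ∈ A, dist x w ≤ (c:ℝ)^n * M := by
    intro n
    induction n with
    | zero =>
      intro x hx
      exact ⟨a, ha, by simpa using hM (Or.inl hx) (Or.inr ha)⟩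
    | succ n ih =>
      intro x hx
      obtain ⟨_, ⟨i, rfl⟩, y, hy, hxy⟩ := hKinv hx
      obtain ⟨w, hw, hd⟩ := ih y hy
      refine ⟨S i w, hAinv (mem_iUnion.2 ⟨i, mem_image_of_mem _ hw⟩), ?_⟩
      calc dist x (S i w) = dist (S i y) (S i w) := by rw [hxy]
      _ ≤ (c:ℝ) * dist y w := (hS i).dist_le_mul y w
      _ ≤ (c:ℝ) * ((c:ℝ)^n * M) := by
          exact mul_le_mul_of_nonneg_left hd hc0
      _ = (c:ℝ)^(n+1) * M := by ring
  intro x hx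
  have hA' : IsClosed A := hAc.isClosed
  rw [← hA'.closure_eq]
  rw [Metric.mem_closure_iff]
  intro δ hδ
  have hMpos : 0 ≤ M := by simpa using hM (Or.inl hx) (Or.inl hx)
  have htend : Tendsto (fun n : ℕ => (c:ℝ)^n * M) atTop (nhds 0) := by
    simpa using (tendsto_pow_atTop_nhds_zero_of_lt_one hc0 hcR).mul_const M
  obtain ⟨n, hn⟩ := (htend.eventually (gt_mem_nhds hδ)).exists
  obtain ⟨w, hw, hd⟩ := key n x hx
  exact ⟨w, hw, lt_of_le_of_lt hd hn⟩


end ZipAux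

open ZipAux in
/-- The attractor of any zipper in a complete metric space is connected,
in fact path-connected. -/
theorem stmt3 {X : Type*} [MetricSpace X] [CompleteSpace X] {m : ℕ} (hm : 0 < m)
    (S : Fin m → X → X) (z : ℕ → X) (ε : Fin m → ℕ) (hzip : IsZipper S z ε)
    (K : Set X) (hK : IsAttractor S K) :
    IsConnected K ∧ IsPathConnected K := by
  classical
  obtain ⟨hε, -, hcon, hz0, hzm⟩ := hzip
  obtain ⟨hKne, hKc, hKeq⟩ := hK
  choose r hr using hcon
  set c : NNReal := Finset.univ.sup r with hc_def
  have hc : c < 1 := by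
    haveI : Nonempty (Fin m) := ⟨⟨0, hm⟩⟩
    rw [Finset.sup_lt_iff (by exact zero_lt_one)]
    exact fun j _ => (hr j).1
  have hLip : ∀ j, LipschitzWith c (S j) :=
    fun j => (hr j).2.weaken (Finset.le_sup (Finset.mem_univ j))
  have hm'0 : (0:ℝ) < m := by exact_mod_cast hm
  haveI : Nonempty X := ⟨z 0⟩
  have hcR : (c : ℝ) < 1 := hc
  have hc0 : (0:ℝ) ≤ c := c.coe_nonneg
  classical
  have hm' : (0:ℝ) < m := by exact_mod_cast hm
  have hmne : (m:ℝ) ≠ 0 := ne_of_gt hm'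
  set f : ℕ → ℝ → X := seq hm S z ε with hf_def
  set I : ℝ → Fin m := idx m hm with hI_def
  have hseq_succ : ∀ n t, f (n+1) t = S (I (cl t)) (f n (sig ε (I (cl t)) (cl t))) := by
    intro n t; rw [hf_def, hI_def]; rfl
  have hcl_mem : ∀ t, cl t ∈ Icc (0:ℝ) 1 :=
    fun t => ⟨le_max_left _ _, max_le (by norm_num) (min_le_left _ _)⟩
  have hcl_eq : ∀ t ∈ Icc (0:ℝ) 1, cl t = t := by
    intro t ht
    simp [ZipAux.cl, min_eq_right ht.2, max_eq_right ht.1]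
  have hidx0 : I 0 = ⟨0, hm⟩ := by
    rw [hI_def]; unfold ZipAux.idx; congr 1; simp
  have hidx1 : I 1 = ⟨m-1, by omega⟩ := by
    rw [hI_def]; unfold ZipAux.idx; congr 1; simp
  have hval : ∀ n, f n 0 = z 0 ∧ f n 1 = z m := by
    intro n
    induction n with
    | zero =>
      constructor
      · simp [hf_def, ZipAux.seq]
      · simp [hf_def, ZipAux.seq]
    | succ n ih =>
      constructor
      · rw [hseq_succ, hcl_eq 0 (by norm_num), hidx0]
        rcases Nat.le_one_iff_eq_zero_or_eq_one.1 (hε ⟨0, hm⟩) with h | h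
        · have hs : sig ε ⟨0, hm⟩ 0 = 0 := by unfold ZipAux.sig; rw [if_pos h]; push_cast; ring
          rw [hs, ih.1]
          simpa [h] using hz0 ⟨0, hm⟩
        · have hs : sig ε ⟨0, hm⟩ 0 = 1 := by unfold ZipAux.sig; rw [if_neg (by omega)]; push_cast; ring
          rw [hs, ih.2]
          simpa [h] using hzm ⟨0, hm⟩
      · rw [hseq_succ, hcl_eq 1 (by norm_num), hidx1]
        have hcast : ((⟨m-1, by omega⟩ : Fin m).val : ℝ) = (m:ℝ) - 1 := by
          have : ((m-1 : ℕ) : ℝ) = (m:ℝ) - 1 := by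
            have : (1:ℕ) ≤ m := hm
            push_cast [this]; ring
          simpa using this
        rcases Nat.le_one_iff_eq_zero_or_eq_one.1 (hε ⟨m-1, by omega⟩) with h | h
        · have hs : sig ε ⟨m-1, by omega⟩ 1 = 1 := by
            unfold ZipAux.sig; rw [if_pos h, hcast]; ring
          rw [hs, ih.2]
          have := hzm ⟨m-1, by omega⟩
          simpa [h, Nat.sub_add_cancel hm] using this
        · have hs : sig ε ⟨m-1, by omega⟩ 1 = 0 := by
            unfold ZipAux.sig; rw [if_neg (by omega), hcast]; ring
          rw [hs, ih.1]
          have := hz0 ⟨m-1, by omega⟩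
          simpa [h, Nat.sub_add_cancel hm] using this
  -- bound on vertex distances
  obtain ⟨M, hM'⟩ := Metric.isBounded_iff.1 ((Set.finite_Iic m).image z).isBounded
  have hM : ∀ a b : ℕ, a ≤ m → b ≤ m → dist (z a) (z b) ≤ M := fun a b ha hb =>
    hM' (mem_image_of_mem z ha) (mem_image_of_mem z hb)
  have hM0 : 0 ≤ M := le_trans dist_nonneg (hM 0 0 (by omega) (by omega))
  -- the values of f 0 and f 1 are vertices
  have hmem0 : ∀ t : ℝ, f 0 t = z 0 ∨ f 0 t = z m := by
    intro t
    by_cases h : t < 1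
    · exact Or.inl (by simp [hf_def, ZipAux.seq, h])
    · exact Or.inr (by simp [hf_def, ZipAux.seq, h])
  have hmem1 : ∀ t : ℝ, ∃ a ≤ m, f 1 t = z a := by
    intro t
    rw [hseq_succ]
    set j := I (cl t)
    rcases hmem0 (sig ε j (cl t)) with h | h
    · rw [h, hz0 j]
      refine ⟨j.val + ε j, ?_, rfl⟩
      have h1 := hε j; have h2 := j.isLt; omega
    · rw [h, hzm j]
      refine ⟨j.val + 1 - ε j, ?_, rfl⟩
      have h2 := j.isLt; omega
  have hd0 : ∀ t : ℝ, dist (f 0 t) (f 1 t) ≤ M := by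
    intro t
    obtain ⟨b, hb, h1⟩ := hmem1 t
    rcases hmem0 t with h | h <;> rw [h, h1]
    · exact hM 0 b (by omega) hb
    · exact hM m b (le_refl m) hb
  -- successive distances
  have hdn : ∀ n, ∀ t : ℝ, dist (f n t) (f (n+1) t) ≤ (c:ℝ)^n * M := by
    intro n
    induction n with
    | zero => intro t; simpa using hd0 t
    | succ n ih =>
      intro t
      rw [hseq_succ n t, hseq_succ (n+1) t]
      calc dist _ _ ≤ (c:ℝ) * dist (f n (sig ε (I (cl t)) (cl t))) (f (n+1) (sig ε (I (cl t)) (cl t))) :=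
            (hLip _).dist_le_mul _ _
      _ ≤ (c:ℝ) * ((c:ℝ)^n * M) := mul_le_mul_of_nonneg_left (ih _) hc0
      _ = (c:ℝ)^(n+1) * M := by ring
  have hcauchy : ∀ t : ℝ, CauchySeq (fun n => f n t) := by
    intro t
    exact cauchySeq_of_le_geometric (c:ℝ) M hcR (fun n => by rw [mul_comm]; exact hdn n t)
  set φ : ℝ → X := fun t => limUnder atTop (fun n => f n t) with hφ_def
  have hφ : ∀ t, Tendsto (fun n => f n t) atTop (nhds (φ t)) := fun t =>
    (hcauchy t).tendsto_limUnder
  have hφ0 : φ 0 = z 0 := by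
    have h2 : Tendsto (fun n => f n 0) atTop (nhds (z 0)) := by
      have : (fun n => f n 0) = fun _ => z 0 := funext (fun n => (hval n).1)
      rw [this]; exact tendsto_const_nhds
    exact tendsto_nhds_unique (hφ 0) h2
  have hφ1 : φ 1 = z m := by
    have h2 : Tendsto (fun n => f n 1) atTop (nhds (z m)) := by
      have : (fun n => f n 1) = fun _ => z m := funext (fun n => (hval n).2)
      rw [this]; exact tendsto_const_nhds
    exact tendsto_nhds_unique (hφ 1) h2
  -- the self-similarity relation
  have hself : ∀ t ∈ Icc (0:ℝ) 1, φ t = S (I t) (φ (sig ε (I t) t)) := by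
    intro t ht
    have h1 : Tendsto (fun n => f (n+1) t) atTop (nhds (φ t)) :=
      (hφ t).comp (tendsto_add_atTop_nat 1)
    have h2 : Tendsto (fun n => f (n+1) t) atTop (nhds (S (I t) (φ (sig ε (I t) t)))) := by
      have heq : (fun n => f (n+1) t) = fun n => S (I t) (f n (sig ε (I t) t)) := by
        funext n; rw [hseq_succ, hcl_eq t ht]
      rw [heq]
      exact ((hLip (I t)).continuous.tendsto _).comp (hφ _)
    exact tendsto_nhds_unique h1 h2
  -- drift bound and global bound for φ
  have hdrift : ∀ n, ∀ t : ℝ, dist (f n t) (f 0 t) ≤ M / (1 - c) := by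
    intro n
    have h1c : (0:ℝ) < 1 - c := by linarith
    induction n with
    | zero => intro t; simp [div_nonneg hM0 (le_of_lt h1c)]
    | succ n ih =>
      intro t
      have key : dist (f (n+1) t) (f 1 t) ≤ (c:ℝ) * (M / (1-c)) := by
        rw [hseq_succ n t, hseq_succ 0 t]
        calc dist _ _ ≤ (c:ℝ) * dist (f n (sig ε (I (cl t)) (cl t))) (f 0 (sig ε (I (cl t)) (cl t))) :=
              (hLip _).dist_le_mul _ _
        _ ≤ (c:ℝ) * (M / (1-c)) := mul_le_mul_of_nonneg_left (ih _) hc0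
      have htri : dist (f (n+1) t) (f 0 t) ≤ dist (f (n+1) t) (f 1 t) + dist (f 1 t) (f 0 t) :=
        dist_triangle _ _ _
      have h10 : dist (f 1 t) (f 0 t) ≤ M := by rw [dist_comm]; exact hd0 t
      have heq : (c:ℝ) * (M / (1-c)) + M = M / (1-c) := by
        field_simp; ring
      linarith
  set D : ℝ := M / (1 - c) + M + M / (1 - c) with hD_def
  have h1c : (0:ℝ) < 1 - c := by linarith
  have hD0 : 0 ≤ D := by
    have := div_nonneg hM0 (le_of_lt h1c); rw [hD_def]; linarith
  have hDist : ∀ s t : ℝ, dist (φ s) (φ t) ≤ D := by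
    intro s t
    refine le_of_tendsto ((hφ s).dist (hφ t)) (Eventually.of_forall (fun n => ?_))
    have h00 : dist (f 0 s) (f 0 t) ≤ M := by
      obtain ⟨a, ha, hfa⟩ := hmem1 s  -- dummy
      rcases hmem0 s with h | h <;> rcases hmem0 t with h' | h' <;> rw [h, h'] <;>
        [exact hM 0 0 (by omega) (by omega); exact hM 0 m (by omega) (le_refl m);
         exact hM m 0 (le_refl m) (by omega); exact hM m m (le_refl m) (le_refl m)]
    calc dist (f n s) (f n t) ≤ dist (f n s) (f 0 s) + dist (f 0 s) (f 0 t) + dist (f 0 t) (f n t) :=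
          dist_triangle4 _ _ _ _
    _ ≤ M / (1-c) + M + M / (1-c) := by
        have := hdrift n s
        have h2 := hdrift n t
        rw [dist_comm (f 0 t)]
        linarith
    _ = D := hD_def.symm
  -- floor facts
  have hIval : ∀ t : ℝ, (I t).val = min ⌊(m:ℝ) * t⌋₊ (m-1) := fun t => rfl
  have hfloor : ∀ t ∈ Icc (0:ℝ) 1, ((I t).val : ℝ) ≤ m * t ∧ (m:ℝ) * t ≤ (I t).val + 1 := by
    intro t ht
    have h0 : (0:ℝ) ≤ m * t := mul_nonneg (le_of_lt hm') ht.1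
    constructor
    · have h1 : ((I t).val : ℝ) ≤ (⌊(m:ℝ)*t⌋₊ : ℝ) := by
        rw [hIval]; exact_mod_cast min_le_left _ _
      exact le_trans h1 (Nat.floor_le h0)
    · by_cases hle : ⌊(m:ℝ)*t⌋₊ ≤ m - 1
      · have h1 : (I t).val = ⌊(m:ℝ)*t⌋₊ := by rw [hIval]; omega
        rw [h1]
        exact le_of_lt (Nat.lt_floor_add_one _)
      · have h1 : (I t).val = m - 1 := by rw [hIval]; omega
        rw [h1]
        have h2 : ((m-1 : ℕ):ℝ) + 1 = (m:ℝ) := by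
          have : (1:ℕ) ≤ m := hm
          push_cast [this]; ring
        rw [h2]
        calc (m:ℝ) * t ≤ (m:ℝ) * 1 := by
              exact mul_le_mul_of_nonneg_left ht.2 (le_of_lt hm')
        _ = m := mul_one _
  have hidx_eq : ∀ (j : Fin m) (t : ℝ), (j.val:ℝ) ≤ m*t → (m:ℝ)*t < j.val+1 → I t = j := by
    intro j t hjt htj
    have h0 : (0:ℝ) ≤ m*t := le_trans (Nat.cast_nonneg _) hjt
    have hfl : ⌊(m:ℝ)*t⌋₊ = j.val := (Nat.floor_eq_iff h0).2 ⟨hjt, htj⟩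
    apply Fin.ext
    rw [hIval, hfl]
    have := j.isLt
    omega
  have hsig_mem : ∀ t ∈ Icc (0:ℝ) 1, sig ε (I t) t ∈ Icc (0:ℝ) 1 := by
    intro t ht
    obtain ⟨h1, h2⟩ := hfloor t ht
    unfold ZipAux.sig
    split <;> constructor <;> linarith
  -- vertices
  have hvertex : ∀ k : ℕ, k ≤ m → ∀ t : ℝ, (m:ℝ)*t = k → φ t = z k := by
    intro k hk t hkt
    have hk0 : (0:ℝ) ≤ (k:ℝ) := Nat.cast_nonneg _
    have hkm : (k:ℝ) ≤ (m:ℝ) := Nat.cast_le.2 hk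
    have ht0 : (0:ℝ) ≤ t := by nlinarith
    have ht1 : t ≤ 1 := by nlinarith
    rcases eq_or_lt_of_le hk with h | h
    · have : t = 1 := by
        have : (m:ℝ)*t = (m:ℝ)*1 := by rw [hkt, mul_one]; exact_mod_cast h
        exact mul_left_cancel₀ hmne this
      rw [this, hφ1, h]
    · have hjf : I t = ⟨k, h⟩ := by
        apply hidx_eq ⟨k, h⟩ t
        · exact le_of_eq hkt.symm
        · rw [hkt]; simp
      have := hself t ⟨ht0, ht1⟩
      rw [hjf] at this
      rw [this]
      rcases Nat.le_one_iff_eq_zero_or_eq_one.1 (hε ⟨k, h⟩) with hE | hE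
      · have hs : sig ε ⟨k, h⟩ t = 0 := by
          unfold ZipAux.sig; rw [if_pos hE]; simp [hkt]
        rw [hs, hφ0]
        simpa [hE] using hz0 ⟨k, h⟩
      · have hs : sig ε ⟨k, h⟩ t = 1 := by
          unfold ZipAux.sig; rw [if_neg (by omega)]; simp [hkt]
        rw [hs, hφ1]
        simpa [hE] using hzm ⟨k, h⟩
  -- the cell relation, valid on closed cells
  have hcell : ∀ (j : Fin m) (t : ℝ), t ∈ Icc (0:ℝ) 1 → (j.val:ℝ) ≤ m*t → (m:ℝ)*t ≤ j.val+1 →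
      φ t = S j (φ (sig ε j t)) := by
    intro j t ht hjt htj
    rcases lt_or_eq_of_le htj with hlt | heq
    · have hjf : I t = j := hidx_eq j t hjt hlt
      have := hself t ht
      rwa [hjf] at this
    · have hL : φ t = z (j.val + 1) := by
        apply hvertex (j.val+1) (by have := j.isLt; omega) t
        push_cast
        exact heq
      rcases Nat.le_one_iff_eq_zero_or_eq_one.1 (hε j) with hE | hE
      · have hs : sig ε j t = 1 := by
          unfold ZipAux.sig; rw [if_pos hE]; linarith
        rw [hs, hφ1, hL]
        have := hzm j
        rw [hE] at this
        simp at this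
        rw [this]
      · have hs : sig ε j t = 0 := by
          unfold ZipAux.sig; rw [if_neg (by omega)]; linarith
        rw [hs, hφ0, hL]
        have := hz0 j
        rw [hE] at this
        rw [this]
  -- the key modulus-of-continuity estimate on m-adic cells
  have hQ : ∀ n : ℕ, ∀ k : ℕ, ∀ s t : ℝ, s ∈ Icc (0:ℝ) 1 → t ∈ Icc (0:ℝ) 1 →
      (k:ℝ) ≤ (m:ℝ)^n * s → (m:ℝ)^n * s ≤ k+1 → (k:ℝ) ≤ (m:ℝ)^n * t → (m:ℝ)^n * t ≤ k+1 →
      dist (φ s) (φ t) ≤ (c:ℝ)^n * D := by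
    intro n
    induction n with
    | zero => intro k s t _ _ _ _ _ _; simpa using hDist s t
    | succ n ih =>
      intro k s t hs ht hks1 hks2 hkt1 hkt2
      have hpn : (0:ℝ) < (m:ℝ)^n := pow_pos hm' n
      have hexp : ∀ u:ℝ, (m:ℝ)^(n+1) * u = (m:ℝ)^n * ((m:ℝ)*u) := fun u => by rw [pow_succ]; ring
      rw [hexp] at hks1 hks2 hkt1 hkt2
      have hIcc : ∀ (k':ℕ) (u:ℝ), ((k':ℝ)+1) ≤ (m:ℝ)^n → (k':ℝ) ≤ (m:ℝ)^n*u →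
          (m:ℝ)^n*u ≤ (k':ℝ)+1 → u ∈ Icc (0:ℝ) 1 := by
        intro k' u hb h1 h2
        have hk0 : (0:ℝ) ≤ (k':ℝ) := Nat.cast_nonneg _
        constructor
        · by_contra h
          push_neg at h
          have := mul_neg_of_pos_of_neg hpn h
          linarith
        · by_contra h
          push_neg at h
          have h3 := mul_lt_mul_of_pos_left h hpn
          rw [mul_one] at h3
          linarith
      by_cases hk : k < m^(n+1)
      · -- main case
        set j : ℕ := k / m^n with hj_def
        set R : ℕ := k % m^n with hR_def
        have hdm : m^n * j + R = k := Nat.div_add_mod k (m^n)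
        have hRlt : R < m^n := Nat.mod_lt _ (Nat.pow_pos hm)
        have hj : j < m := by
          have hkmm : k < m^n * m := by rw [pow_succ] at hk; exact hk
          have hle : m^n * j ≤ k := by rw [mul_comm]; exact Nat.div_mul_le_self k (m^n)
          have h2 : m^n * j < m^n * m := lt_of_le_of_lt hle hkmm
          exact Nat.lt_of_mul_lt_mul_left h2
        have hdmR : (m:ℝ)^n * (j:ℝ) + (R:ℝ) = (k:ℝ) := by exact_mod_cast hdm
        have hRR : (R:ℝ) + 1 ≤ (m:ℝ)^n := by exact_mod_cast hRlt
        have hR0 : (0:ℝ) ≤ (R:ℝ) := Nat.cast_nonneg _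
        have hjs1 : (j:ℝ) ≤ (m:ℝ)*s := by
          have h1 : (m:ℝ)^n * (j:ℝ) ≤ (m:ℝ)^n * ((m:ℝ)*s) := by linarith
          exact le_of_mul_le_mul_left h1 hpn
        have hjs2 : (m:ℝ)*s ≤ (j:ℝ)+1 := by
          have h1 : (m:ℝ)^n * ((m:ℝ)*s) ≤ (m:ℝ)^n * ((j:ℝ)+1) := by
            have hh : (m:ℝ)^n * ((j:ℝ)+1) = (m:ℝ)^n * (j:ℝ) + (m:ℝ)^n := by ring
            linarith
          exact le_of_mul_le_mul_left h1 hpn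
        have hjt1 : (j:ℝ) ≤ (m:ℝ)*t := by
          have h1 : (m:ℝ)^n * (j:ℝ) ≤ (m:ℝ)^n * ((m:ℝ)*t) := by linarith
          exact le_of_mul_le_mul_left h1 hpn
        have hjt2 : (m:ℝ)*t ≤ (j:ℝ)+1 := by
          have h1 : (m:ℝ)^n * ((m:ℝ)*t) ≤ (m:ℝ)^n * ((j:ℝ)+1) := by
            have hh : (m:ℝ)^n * ((j:ℝ)+1) = (m:ℝ)^n * (j:ℝ) + (m:ℝ)^n := by ring
            linarith
          exact le_of_mul_le_mul_left h1 hpn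
        have hφs : φ s = S ⟨j, hj⟩ (φ (sig ε ⟨j, hj⟩ s)) := hcell ⟨j, hj⟩ s hs hjs1 hjs2
        have hφt : φ t = S ⟨j, hj⟩ (φ (sig ε ⟨j, hj⟩ t)) := hcell ⟨j, hj⟩ t ht hjt1 hjt2
        have hfin : ∀ (k':ℕ) (u v : ℝ), u ∈ Icc (0:ℝ) 1 → v ∈ Icc (0:ℝ) 1 →
            (k':ℝ) ≤ (m:ℝ)^n*u → (m:ℝ)^n*u ≤ (k':ℝ)+1 → (k':ℝ) ≤ (m:ℝ)^n*v → (m:ℝ)^n*v ≤ (k':ℝ)+1 →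
            sig ε ⟨j, hj⟩ s = u → sig ε ⟨j, hj⟩ t = v → dist (φ s) (φ t) ≤ (c:ℝ)^(n+1)*D := by
          intro k' u v hu hv h1 h2 h3 h4 hsu htv
          rw [hφs, hφt, hsu, htv]
          calc dist (S ⟨j, hj⟩ (φ u)) (S ⟨j, hj⟩ (φ v)) ≤ (c:ℝ) * dist (φ u) (φ v) :=
                (hLip _).dist_le_mul _ _
          _ ≤ (c:ℝ) * ((c:ℝ)^n * D) :=
                mul_le_mul_of_nonneg_left (ih k' u v hu hv h1 h2 h3 h4) hc0
          _ = (c:ℝ)^(n+1)*D := by ring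
        rcases Nat.le_one_iff_eq_zero_or_eq_one.1 (hε ⟨j, hj⟩) with hE | hE
        · -- orientation preserving
          have hxs : (m:ℝ)^n*((m:ℝ)*s - (j:ℝ)) = (m:ℝ)^n*((m:ℝ)*s) - (m:ℝ)^n*(j:ℝ) := by ring
          have hxt : (m:ℝ)^n*((m:ℝ)*t - (j:ℝ)) = (m:ℝ)^n*((m:ℝ)*t) - (m:ℝ)^n*(j:ℝ) := by ring
          have hsu : sig ε ⟨j, hj⟩ s = (m:ℝ)*s - (j:ℝ) := by
            unfold ZipAux.sig; rw [if_pos hE]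
          have htv : sig ε ⟨j, hj⟩ t = (m:ℝ)*t - (j:ℝ) := by
            unfold ZipAux.sig; rw [if_pos hE]
          have h1 : (R:ℝ) ≤ (m:ℝ)^n*((m:ℝ)*s - (j:ℝ)) := by rw [hxs]; linarith
          have h2 : (m:ℝ)^n*((m:ℝ)*s - (j:ℝ)) ≤ (R:ℝ)+1 := by rw [hxs]; linarith
          have h3 : (R:ℝ) ≤ (m:ℝ)^n*((m:ℝ)*t - (j:ℝ)) := by rw [hxt]; linarith
          have h4 : (m:ℝ)^n*((m:ℝ)*t - (j:ℝ)) ≤ (R:ℝ)+1 := by rw [hxt]; linarith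
          exact hfin R _ _ (hIcc R _ hRR h1 h2) (hIcc R _ hRR h3 h4) h1 h2 h3 h4 hsu htv
        · -- orientation reversing
          have hk'R : ((m^n - 1 - R : ℕ):ℝ) = (m:ℝ)^n - 1 - (R:ℝ) := by
            rw [Nat.sub_sub, Nat.cast_sub (by omega : 1 + R ≤ m^n)]
            push_cast
            ring
          have hxs : (m:ℝ)^n*(((j:ℝ)+1) - (m:ℝ)*s) = (m:ℝ)^n*(j:ℝ) + (m:ℝ)^n - (m:ℝ)^n*((m:ℝ)*s) := by
            ring
          have hxt : (m:ℝ)^n*(((j:ℝ)+1) - (m:ℝ)*t) = (m:ℝ)^n*(j:ℝ) + (m:ℝ)^n - (m:ℝ)^n*((m:ℝ)*t) := by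
            ring
          have hsu : sig ε ⟨j, hj⟩ s = ((j:ℝ)+1) - (m:ℝ)*s := by
            unfold ZipAux.sig; rw [if_neg (by omega)]
          have htv : sig ε ⟨j, hj⟩ t = ((j:ℝ)+1) - (m:ℝ)*t := by
            unfold ZipAux.sig; rw [if_neg (by omega)]
          have hb : ((m^n - 1 - R : ℕ):ℝ) + 1 ≤ (m:ℝ)^n := by rw [hk'R]; linarith
          have h1 : ((m^n - 1 - R : ℕ):ℝ) ≤ (m:ℝ)^n*(((j:ℝ)+1) - (m:ℝ)*s) := by
            rw [hk'R, hxs]; linarith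
          have h2 : (m:ℝ)^n*(((j:ℝ)+1) - (m:ℝ)*s) ≤ ((m^n - 1 - R : ℕ):ℝ)+1 := by
            rw [hk'R, hxs]; linarith
          have h3 : ((m^n - 1 - R : ℕ):ℝ) ≤ (m:ℝ)^n*(((j:ℝ)+1) - (m:ℝ)*t) := by
            rw [hk'R, hxt]; linarith
          have h4 : (m:ℝ)^n*(((j:ℝ)+1) - (m:ℝ)*t) ≤ ((m^n - 1 - R : ℕ):ℝ)+1 := by
            rw [hk'R, hxt]; linarith
          exact hfin (m^n - 1 - R) _ _ (hIcc _ _ hb h1 h2) (hIcc _ _ hb h3 h4) h1 h2 h3 h4 hsu htv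
      · -- degenerate case : s = t = 1
        have hmnR : (m:ℝ)^(n+1) ≤ (k:ℝ) := by
          calc (m:ℝ)^(n+1) = ((m^(n+1):ℕ):ℝ) := by push_cast; ring
          _ ≤ (k:ℝ) := Nat.cast_le.2 (not_lt.1 hk)
        rw [pow_succ] at hmnR
        have hs1 : s = 1 := by
          refine le_antisymm hs.2 ?_
          have h5 : (m:ℝ)^n * (m:ℝ) ≤ (m:ℝ)^n * ((m:ℝ)*s) := by linarith
          have h6 : (m:ℝ) ≤ (m:ℝ)*s := le_of_mul_le_mul_left h5 hpn
          have h7 : (m:ℝ)*1 ≤ (m:ℝ)*s := by rw [mul_one]; exact h6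
          exact le_of_mul_le_mul_left h7 hm'
        have ht1 : t = 1 := by
          refine le_antisymm ht.2 ?_
          have h5 : (m:ℝ)^n * (m:ℝ) ≤ (m:ℝ)^n * ((m:ℝ)*t) := by linarith
          have h6 : (m:ℝ) ≤ (m:ℝ)*t := le_of_mul_le_mul_left h5 hpn
          have h7 : (m:ℝ)*1 ≤ (m:ℝ)*t := by rw [mul_one]; exact h6
          exact le_of_mul_le_mul_left h7 hm'
        rw [hs1, ht1, dist_self]
        exact mul_nonneg (pow_nonneg hc0 _) hD0
  -- oscillation bound
  have hosc : ∀ n : ℕ, ∀ s t : ℝ, s ∈ Icc (0:ℝ) 1 → t ∈ Icc (0:ℝ) 1 → |s - t| ≤ 1/(m:ℝ)^n →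
      dist (φ s) (φ t) ≤ 2*((c:ℝ)^n*D) := by
    have main : ∀ n : ℕ, ∀ s t : ℝ, s ∈ Icc (0:ℝ) 1 → t ∈ Icc (0:ℝ) 1 → s ≤ t →
        t - s ≤ 1/(m:ℝ)^n → dist (φ s) (φ t) ≤ 2*((c:ℝ)^n*D) := by
      intro n s t hs ht hst hd
      have hpn : (0:ℝ) < (m:ℝ)^n := pow_pos hm' n
      have h0 : (0:ℝ) ≤ (m:ℝ)^n * s := mul_nonneg hpn.le hs.1
      set k : ℕ := ⌊(m:ℝ)^n * s⌋₊ with hk_def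
      have hk1 : (k:ℝ) ≤ (m:ℝ)^n*s := Nat.floor_le h0
      have hk2 : (m:ℝ)^n*s ≤ (k:ℝ)+1 := (Nat.lt_floor_add_one _).le
      have hkt1' : (m:ℝ)^n*s ≤ (m:ℝ)^n*t := mul_le_mul_of_nonneg_left hst hpn.le
      have hcnD : 0 ≤ (c:ℝ)^n*D := mul_nonneg (pow_nonneg hc0 n) hD0
      have htup : (m:ℝ)^n*t ≤ (k:ℝ)+2 := by
        have hh : (m:ℝ)^n*t = (m:ℝ)^n*s + (m:ℝ)^n*(t-s) := by ring
        have h2 : (m:ℝ)^n*(t-s) ≤ (m:ℝ)^n*(1/(m:ℝ)^n) := mul_le_mul_of_nonneg_left hd hpn.le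
        rw [mul_one_div, div_self (ne_of_gt hpn)] at h2
        linarith
      by_cases hcase : (m:ℝ)^n*t ≤ (k:ℝ)+1
      · have := hQ n k s t hs ht hk1 hk2 (le_trans hk1 hkt1') hcase
        linarith
      · push_neg at hcase
        set b : ℝ := ((k:ℝ)+1)/(m:ℝ)^n with hb_def
        have hbmul : (m:ℝ)^n * b = (k:ℝ)+1 := by
          rw [hb_def, mul_comm, div_mul_cancel₀ _ (ne_of_gt hpn)]
        have hsb : s ≤ b := le_of_mul_le_mul_left (by linarith) hpn
        have hbt : b ≤ t := le_of_mul_le_mul_left (by linarith [hcase.le]) hpn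
        have hbI : b ∈ Icc (0:ℝ) 1 := ⟨le_trans hs.1 hsb, le_trans hbt ht.2⟩
        have hq1 := hQ n k s b hs hbI hk1 hk2 (by rw [hbmul]; linarith) (by rw [hbmul])
        have hcast : ((k+1:ℕ):ℝ) = (k:ℝ)+1 := by push_cast; ring
        have hq2 := hQ n (k+1) b t hbI ht (by rw [hcast, hbmul]) (by rw [hcast, hbmul]; linarith)
          (by rw [hcast]; exact hcase.le) (by rw [hcast]; linarith)
        calc dist (φ s) (φ t) ≤ dist (φ s) (φ b) + dist (φ b) (φ t) := dist_triangle _ _ _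
        _ ≤ 2*((c:ℝ)^n*D) := by linarith
    intro n s t hs ht hd
    rcases le_total s t with h | h
    · refine main n s t hs ht h ?_
      rwa [abs_sub_comm, abs_of_nonneg (by linarith)] at hd
    · rw [dist_comm]
      refine main n t s ht hs h ?_
      rwa [abs_of_nonneg (by linarith)] at hd
  -- continuity
  have hcont : ContinuousOn φ (Icc (0:ℝ) 1) := by
    rw [Metric.continuousOn_iff]
    intro x hx η hη
    have htend : Tendsto (fun n : ℕ => 2*((c:ℝ)^n*D)) atTop (nhds 0) := by
      have h1 := ((tendsto_pow_atTop_nhds_zero_of_lt_one hc0 hcR).mul_const D).const_mul 2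
      simpa using h1
    obtain ⟨n, hn⟩ := (htend.eventually (gt_mem_nhds hη)).exists
    refine ⟨1/(m:ℝ)^n, by positivity, fun y hy hxy => ?_⟩
    have hyx : |y - x| ≤ 1/(m:ℝ)^n := le_of_lt (by rwa [Real.dist_eq] at hxy)
    exact lt_of_le_of_lt (hosc n y x hy hx hyx) hn
  -- the attractor candidate
  set A : Set X := φ '' Icc 0 1 with hA_def
  have hAc : IsCompact A := isCompact_Icc.image_of_continuousOn hcont
  have hAne : A.Nonempty := ⟨φ 0, mem_image_of_mem φ (by constructor <;> norm_num)⟩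
  have hApc : IsPathConnected A :=
    ((convex_Icc (0:ℝ) 1).isPathConnected (nonempty_Icc.2 zero_le_one)).image' hcont
  have hAsub : (⋃ i, S i '' A) ⊆ A := by
    rintro x hx
    obtain ⟨_, ⟨i, rfl⟩, _, ⟨u, hu, rfl⟩, rfl⟩ := hx
    have hi1 : ((i.val:ℕ):ℝ) + 1 ≤ (m:ℝ) := by exact_mod_cast i.isLt
    have hi0 : (0:ℝ) ≤ (i.val:ℝ) := Nat.cast_nonneg _
    set num : ℝ := (i.val:ℝ) + (if ε i = 0 then u else 1 - u) with hnum_def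
    have hnum1 : (i.val:ℝ) ≤ num ∧ num ≤ (i.val:ℝ)+1 := by
      rw [hnum_def]; split <;> constructor <;> linarith [hu.1, hu.2]
    set tt : ℝ := num / m with htt_def
    have hmt : (m:ℝ)*tt = num := by
      rw [htt_def, mul_comm, div_mul_cancel₀ _ hmne]
    have httI : tt ∈ Icc (0:ℝ) 1 := by
      constructor
      · exact div_nonneg (le_trans hi0 hnum1.1) (le_of_lt hm')
      · rw [htt_def, div_le_one hm']; linarith [hnum1.2]
    have hcl1 : (i.val:ℝ) ≤ (m:ℝ)*tt := by rw [hmt]; exact hnum1.1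
    have hcl2 : (m:ℝ)*tt ≤ (i.val:ℝ)+1 := by rw [hmt]; exact hnum1.2
    have hrel := hcell i tt httI hcl1 hcl2
    have hsig : sig ε i tt = u := by
      unfold ZipAux.sig
      rcases Nat.le_one_iff_eq_zero_or_eq_one.1 (hε i) with hE | hE
      · rw [if_pos hE, hmt, hnum_def, if_pos hE]; ring
      · rw [if_neg (by omega), hmt, hnum_def, if_neg (by omega)]; ring
    rw [hsig] at hrel
    exact ⟨tt, httI, hrel⟩
  have hAsup : A ⊆ ⋃ i, S i '' A := by
    rintro x ⟨t, ht, rfl⟩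
    exact mem_iUnion.2 ⟨I t, ⟨φ (sig ε (I t) t), ⟨sig ε (I t) t, hsig_mem t ht, rfl⟩, (hself t ht).symm⟩⟩
  have h1 : K ⊆ A := ZipAux.subset_of_invariant S c hc hLip A K hAne hAc hAsub hKc hKeq.subset
  have h2 : A ⊆ K := ZipAux.subset_of_invariant S c hc hLip K A hKne hKc hKeq.symm.subset hAc hAsup
  have hKA : K = A := Subset.antisymm h1 h2
  rw [hKA]
  exact ⟨hApc.isConnected, hApc⟩

end ZipperProof
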